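/- Let R = ℤ[√−2] and η = √−2. There exists a group homomorphism χ from the unit group (R/(η⁵))^× to {1, −1} such that: (i) for every odd integer a, χ(class of a) = 1 if a ≡ 1 or 3 (mod 8), and χ(class of a) = −1 if a ≡ 5 or 7 (mod 8); and (ii) χ(class of c − d√−2) = χ(class of c + d√−2) for every c + d√−2 ∈ ℤ[√−2] whose class in R/(η⁵) is a unit (i.e. χ is invariant under the conjugation automorphism c + d√−2 ↦ c − d√−2). -/

import Mathlib

open Zsqrtd

noncomputable section Stmt15Aux

def g15 (c : ZMod 8) (d : ZMod 4) : ℤˣ :=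
  (if c = 1 ∨ c = 3 then 1 else -1) * (if d = 2 then -1 else 1)

def c4 : ZMod 8 →+* ZMod 4 := ZMod.castHom (show (4:ℕ) ∣ 8 by norm_num) (ZMod 4)

def F15 (z : ℤ√(-2)) : ℤˣ := g15 (z.re : ZMod 8) (z.im : ZMod 4)

abbrev I15 : Ideal (ℤ√(-2)) := Ideal.span {(Zsqrtd.sqrtd : ℤ√(-2)) ^ 5}

lemma eta5 : (Zsqrtd.sqrtd : ℤ√(-2)) ^ 5 = ⟨0, 4⟩ := by
  ext <;> simp [pow_succ, Zsqrtd.re_mul, Zsqrtd.im_mul]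

lemma dvd_char (z : ℤ√(-2)) :
    (Zsqrtd.sqrtd : ℤ√(-2)) ^ 5 ∣ z ↔ 8 ∣ z.re ∧ 4 ∣ z.im := by
  rw [eta5]
  constructor
  · rintro ⟨t, rfl⟩
    constructor
    · exact ⟨-t.im, by simp [Zsqrtd.re_mul]; try ring⟩
    · exact ⟨t.re, by simp [Zsqrtd.im_mul]⟩
  · rintro ⟨⟨x, hx⟩, ⟨y, hy⟩⟩
    refine ⟨⟨y, -x⟩, ?_⟩
    ext
    · simp [Zsqrtd.re_mul, hx]; try ring
    · simp [Zsqrtd.im_mul, hy]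

lemma mem_I15 (z : ℤ√(-2)) : z ∈ I15 ↔ 8 ∣ z.re ∧ 4 ∣ z.im := by
  rw [Ideal.mem_span_singleton]; exact dvd_char z

lemma F15_congr {z w : ℤ√(-2)} (h : Ideal.Quotient.mk I15 z = Ideal.Quotient.mk I15 w) :
    F15 z = F15 w := by
  rw [Ideal.Quotient.eq, mem_I15] at h
  obtain ⟨h1, h2⟩ := h
  rw [Zsqrtd.re_sub] at h1
  rw [Zsqrtd.im_sub] at h2
  have e1 : (z.re : ZMod 8) = (w.re : ZMod 8) := by
    rw [ZMod.intCast_eq_intCast_iff]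
    exact Int.ModEq.symm ((Int.modEq_iff_dvd).2 (by push_cast; omega))
  have e2 : (z.im : ZMod 4) = (w.im : ZMod 4) := by
    rw [ZMod.intCast_eq_intCast_iff]
    exact Int.ModEq.symm ((Int.modEq_iff_dvd).2 (by push_cast; omega))
  unfold F15
  rw [e1, e2]

lemma key15 : ∀ x y b d : ZMod 8,
    g15 ((2*x+1)*(2*y+1) - 2*(b*d)) (c4 ((2*x+1)*d + b*(2*y+1))) =
      g15 (2*x+1) (c4 b) * g15 (2*y+1) (c4 d) := by
  set_option maxHeartbeats 4000000 in decide

lemma neg15 : ∀ c : ZMod 8, ∀ d : ZMod 4, g15 c (-d) = g15 c d := by decide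

lemma F15_mul {z w : ℤ√(-2)} (hz : Odd z.re) (hw : Odd w.re) :
    F15 (z * w) = F15 z * F15 w := by
  obtain ⟨k, hk⟩ := hz
  obtain ⟨l, hl⟩ := hw
  unfold F15
  have hre : (z * w).re = z.re * w.re - 2 * (z.im * w.im) := by
    simp [Zsqrtd.re_mul]; ring
  have him : (z * w).im = z.re * w.im + z.im * w.re := by
    simp [Zsqrtd.im_mul]
  have h1 : ∀ m : ℤ, ((m : ZMod 4)) = c4 ((m : ZMod 8)) := fun m => (map_intCast c4 m).symm
  rw [hre, him, hk, hl, h1 ((2*k+1) * w.im + z.im * (2*l+1)), h1 z.im, h1 w.im]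
  push_cast
  exact key15 _ _ _ _

def Fq15 (q : ℤ√(-2) ⧸ I15) : ℤˣ := F15 (Quotient.out q)

lemma mk_out15 (q : ℤ√(-2) ⧸ I15) : Ideal.Quotient.mk I15 (Quotient.out q) = q := by
  conv_rhs => rw [← Quotient.out_eq' q]
  rfl

lemma Fq15_mk (z : ℤ√(-2)) : Fq15 (Ideal.Quotient.mk I15 z) = F15 z :=
  F15_congr (mk_out15 _)

lemma odd_of_isUnit {z : ℤ√(-2)} (h : IsUnit (Ideal.Quotient.mk I15 z)) : Odd z.re := by
  rw [← Int.not_even_iff_odd]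
  intro ⟨m, hm⟩
  have hz : z = Zsqrtd.sqrtd * ⟨z.im, -m⟩ := by
    ext <;> simp [Zsqrtd.re_mul, Zsqrtd.im_mul] <;> omega
  rw [hz, map_mul] at h
  have hu : IsUnit (Ideal.Quotient.mk I15 (Zsqrtd.sqrtd : ℤ√(-2))) :=
    isUnit_of_mul_isUnit_left h
  have h5 : (Ideal.Quotient.mk I15 (Zsqrtd.sqrtd : ℤ√(-2))) ^ 5 = 0 := by
    rw [← map_pow, Ideal.Quotient.eq_zero_iff_mem]
    exact Ideal.mem_span_singleton.2 dvd_rfl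
  have h0 : IsUnit (0 : ℤ√(-2) ⧸ I15) := h5 ▸ hu.pow 5
  rw [isUnit_zero_iff] at h0
  have h1 : (1 : ℤ√(-2)) ∈ I15 := by
    rw [← Ideal.Quotient.eq_zero_iff_mem, map_one]
    exact h0.symm
  rw [mem_I15] at h1
  simp at h1

def chi15 : (ℤ√(-2) ⧸ I15)ˣ →* ℤˣ where
  toFun u := Fq15 u.val
  map_one' := by
    show Fq15 ((1 : (ℤ√(-2) ⧸ I15)ˣ) : ℤ√(-2) ⧸ I15) = 1
    rw [Units.val_one, ← map_one (Ideal.Quotient.mk I15), Fq15_mk]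
    show g15 ((1:ℤ√(-2)).re : ZMod 8) ((1:ℤ√(-2)).im : ZMod 4) = 1
    rw [Zsqrtd.re_one, Zsqrtd.im_one]
    decide
  map_mul' u v := by
    have hu : (u : ℤ√(-2) ⧸ I15) = Ideal.Quotient.mk I15 (Quotient.out (u : ℤ√(-2) ⧸ I15)) :=
      (mk_out15 _).symm
    have hv : (v : ℤ√(-2) ⧸ I15) = Ideal.Quotient.mk I15 (Quotient.out (v : ℤ√(-2) ⧸ I15)) :=
      (mk_out15 _).symm
    have hou : Odd (Quotient.out (u : ℤ√(-2) ⧸ I15)).re :=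
      odd_of_isUnit (by rw [← hu]; exact u.isUnit)
    have hov : Odd (Quotient.out (v : ℤ√(-2) ⧸ I15)).re :=
      odd_of_isUnit (by rw [← hv]; exact v.isUnit)
    show Fq15 ((u * v : _ˣ) : ℤ√(-2) ⧸ I15) = Fq15 _ * Fq15 _
    rw [Units.val_mul, hu, hv, ← map_mul, Fq15_mk, F15_mul hou hov,
      Fq15_mk, Fq15_mk]

end Stmt15Aux

/-- Let `R = ℤ[√-2]` and `η = √-2`. There is a group homomorphism `χ` from
`(R ⧸ (η⁵))ˣ` to `{1, -1} = ℤˣ` such that: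
(i)  for every odd integer `a`, `χ` takes the value `1` on the class of `a` if
     `a ≡ 1, 3 (mod 8)` and the value `-1` if `a ≡ 5, 7 (mod 8)`;
(ii) `χ` is invariant under the conjugation automorphism `c + d√-2 ↦ c - d√-2` (`star`). -/
theorem stmt_15 :
    ∃ χ : (ℤ√(-2) ⧸ Ideal.span {(Zsqrtd.sqrtd : ℤ√(-2)) ^ 5})ˣ →* ℤˣ,
      (∀ (u : (ℤ√(-2) ⧸ Ideal.span {(Zsqrtd.sqrtd : ℤ√(-2)) ^ 5})ˣ) (a : ℤ), Odd a →
        (u : ℤ√(-2) ⧸ Ideal.span {(Zsqrtd.sqrtd : ℤ√(-2)) ^ 5}) =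
          Ideal.Quotient.mk (Ideal.span {(Zsqrtd.sqrtd : ℤ√(-2)) ^ 5}) (a : ℤ√(-2)) →
        ((a % 8 = 1 ∨ a % 8 = 3) → χ u = 1) ∧ ((a % 8 = 5 ∨ a % 8 = 7) → χ u = -1)) ∧
      (∀ (u v : (ℤ√(-2) ⧸ Ideal.span {(Zsqrtd.sqrtd : ℤ√(-2)) ^ 5})ˣ) (z : ℤ√(-2)),
        (u : ℤ√(-2) ⧸ Ideal.span {(Zsqrtd.sqrtd : ℤ√(-2)) ^ 5}) =
          Ideal.Quotient.mk (Ideal.span {(Zsqrtd.sqrtd : ℤ√(-2)) ^ 5}) z →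
        (v : ℤ√(-2) ⧸ Ideal.span {(Zsqrtd.sqrtd : ℤ√(-2)) ^ 5}) =
          Ideal.Quotient.mk (Ideal.span {(Zsqrtd.sqrtd : ℤ√(-2)) ^ 5}) (star z) →
        χ v = χ u) := by
  refine ⟨chi15, ?_, ?_⟩
  · intro u a _ hu
    have hval : chi15 u = g15 ((a : ℤ) : ZMod 8) (((0:ℤ) : ZMod 4)) := by
      have h0 : chi15 u = Fq15 (u : ℤ√(-2) ⧸ I15) := rfl
      rw [h0, hu, Fq15_mk]
      show g15 ((a : ℤ√(-2)).re : ZMod 8) ((a : ℤ√(-2)).im : ZMod 4) = _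
      rw [Zsqrtd.re_intCast, Zsqrtd.im_intCast]
    have hmod : ((a : ℤ) : ZMod 8) = ((a % 8 : ℤ) : ZMod 8) := by
      rw [show ((8:ℤ)) = ((8:ℕ):ℤ) by norm_num, ZMod.intCast_mod]
    constructor
    · rintro (h | h) <;> (rw [hval, hmod, h]; norm_cast)
    · rintro (h | h) <;> (rw [hval, hmod, h]; norm_cast)
  · intro u v z hu hv
    have h0 : chi15 v = Fq15 (v : ℤ√(-2) ⧸ I15) := rfl
    have h1 : chi15 u = Fq15 (u : ℤ√(-2) ⧸ I15) := rfl
    rw [h0, h1, hu, hv, Fq15_mk, Fq15_mk]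
    show g15 ((star z).re : ZMod 8) ((star z).im : ZMod 4) =
      g15 (z.re : ZMod 8) (z.im : ZMod 4)
    rw [Zsqrtd.re_star, Zsqrtd.im_star]
    push_cast
    exact neg15 _ _
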